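/- For any integers m ≥ 0, n ≥ 1, any subset S of [m] = {1,2,…,m} with s = |S|, the sum over all complete (m+1)-ary trees T with n internal vertices of the product over all internal vertices v of T of (m − s − 1 + 1/ℍ_v^S) equals (1/(mn+1)) · C((mn+1)(m−s), n), where C(N, n) = N(N−1)⋯(N−n+1)/n! is the binomial coefficient evaluated at the integer N = (mn+1)(m−s). -/

import Mathlib

open Polynomial Finset

/-- A complete `m`-ary tree: a `leaf` is an external vertex and a `node`
has exactly `m` linearly ordered subtrees. -/
inductive MTree (m : ℕ) : Type
  | leaf : MTree m
  | node : (Fin m → MTree m) → MTree m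

namespace MTree

/-- The number of internal vertices of a complete `m`-ary tree. -/
def internals {m : ℕ} : MTree m → ℕ
  | leaf => 0
  | node c => 1 + ∑ i, (c i).internals

/-- The first kind of hook length of the root of `node c`: one plus the number of
internal vertices of all subtrees except the rightmost one. -/
def hook1 {m : ℕ} (c : Fin m → MTree m) : ℕ :=
  1 + ∑ i ∈ Finset.univ.filter (fun i : Fin m => (i : ℕ) + 1 < m), (c i).internals

/-- The product of `f (𝓗_v)` over all internal vertices `v` of a complete `m`-ary
tree, where `𝓗_v` is the first kind of hook length. -/
def hookProd1 {m : ℕ} {R : Type*} [CommSemiring R] (f : ℕ → R) : MTree m → R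
  | leaf => 1
  | node c => f (hook1 c) * ∏ i, hookProd1 f (c i)

/-- The number of internal vertices of the `(m+1-|S|)`-ary tree `T^S` obtained from a
complete `(m+1)`-ary tree `T` by recursively deleting, for every `r ∈ S ⊆ [m]`,
the `r`-th subtree of every remaining internal vertex (the label `r ∈ {1,…,m}`
corresponds to the child with index `r - 1`, i.e. to `Fin.castSucc` of `Fin m`). -/
def internalsS {m : ℕ} (S : Finset (Fin m)) : MTree (m + 1) → ℕ
  | leaf => 0
  | node c => 1 + ∑ i ∈ (S.image Fin.castSucc)ᶜ, internalsS S (c i)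

/-- The product of `f (ℍ_v^S)` over all internal vertices `v` of a complete
`(m+1)`-ary tree, where `ℍ_v^S` is the second kind of hook length. -/
def hookProdS {m : ℕ} {R : Type*} [CommSemiring R] (S : Finset (Fin m)) (f : ℕ → R) :
    MTree (m + 1) → R
  | leaf => 1
  | node c => f (internalsS S (node c)) * ∏ i, hookProdS S f (c i)

end MTree


namespace HLAux

noncomputable def V (q p n : ℕ) : ℚ :=
  if p = 0 then (if n = 0 then 1 else 0)
  else (p : ℚ) / ((q * n + p : ℕ) : ℚ) * (((q * n + p).choose n : ℕ) : ℚ)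

lemma V_p0 (q n : ℕ) : V q 0 n = if n = 0 then 1 else 0 := by simp [V]

lemma V_n0 (q p : ℕ) : V q p 0 = 1 := by
  rcases Nat.eq_zero_or_pos p with h | h
  · simp [V, h]
  · have hp : p ≠ 0 := h.ne'
    have : ((p : ℕ) : ℚ) ≠ 0 := by exact_mod_cast hp
    simp [V, hp, this]

lemma V_formula (q p n : ℕ) (h : 1 ≤ p ∨ 1 ≤ n) :
    V q p n = (p : ℚ) / ((q * n + p : ℕ) : ℚ) * (((q * n + p).choose n : ℕ) : ℚ) := by
  rcases Nat.eq_zero_or_pos p with hp | hp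
  · subst hp
    rcases h with h | h
    · omega
    · rw [V_p0, if_neg (by omega)]
      push_cast
      simp
  · simp [V, hp.ne']

lemma cast_choose_succ_right (M k : ℕ) :
    ((k : ℚ) + 1) * (M.choose (k + 1) : ℚ) = ((M : ℚ) - k) * (M.choose k : ℚ) := by
  by_cases hk : k ≤ M
  · have := Nat.choose_succ_right_eq M k
    have hcast : ((M.choose (k+1) * (k+1) : ℕ) : ℚ) = ((M.choose k * (M - k) : ℕ) : ℚ) := by
      exact_mod_cast congrArg (Nat.cast : ℕ → ℚ) this
    push_cast [Nat.cast_sub hk] at hcast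
    linarith [hcast]
  · push_neg at hk
    have h1 : M.choose (k+1) = 0 := Nat.choose_eq_zero_of_lt (by omega)
    have h2 : M.choose k = 0 := Nat.choose_eq_zero_of_lt hk
    simp [h1, h2]

lemma V_rec' (q p n : ℕ) :
    V q (p + 1) n = V q p n + (if n = 0 then 0 else V q (p + q) (n - 1)) := by
  rcases n with _ | n'
  · simp [V_n0]
  · simp only [Nat.succ_ne_zero, if_false]
    by_cases hpq : p + q = 0
    · obtain ⟨hp, hq⟩ : p = 0 ∧ q = 0 := by omega
      subst hp; subst hq
      simp only [V, Nat.add_eq, Nat.zero_mul, Nat.zero_add]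
      norm_num
      rcases n' with _ | n''
      · norm_num
      · simp [Nat.choose_eq_zero_of_lt (by omega : 1 < n'' + 2)]
    · -- general case
      have h1 : V q (p+1) (n'+1)
          = ((p:ℚ)+1) / ((q * (n'+1) + (p+1) : ℕ) : ℚ) * (((q * (n'+1) + (p+1)).choose (n'+1) : ℕ) : ℚ) := by
        rw [V_formula q (p+1) (n'+1) (Or.inl (by omega))]; push_cast; ring_nf
      have h2 : V q p (n'+1)
          = (p:ℚ) / ((q * (n'+1) + p : ℕ) : ℚ) * (((q * (n'+1) + p).choose (n'+1) : ℕ) : ℚ) :=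
        V_formula q p (n'+1) (Or.inr (by omega))
      have h3 : V q (p+q) n'
          = ((p:ℚ)+(q:ℚ)) / ((q * n' + (p+q) : ℕ) : ℚ) * (((q * n' + (p+q)).choose n' : ℕ) : ℚ) := by
        rw [V_formula q (p+q) n' (Or.inl (by omega))]; push_cast; ring_nf
      simp only [Nat.add_sub_cancel]
      set N1 : ℕ := q * (n'+1) + p with hN1
      have hqe : q * n' + (p + q) = N1 := by rw [hN1, Nat.mul_succ]; omega
      have hN1pos : 1 ≤ N1 := by omega
      have hsucc : q * (n'+1) + (p+1) = N1 + 1 := by rw [hN1]; omega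
      rw [h1, h2, h3, hqe, hsucc]
      have pascal : (N1 + 1).choose (n'+1) = N1.choose n' + N1.choose (n'+1) :=
        Nat.choose_succ_succ N1 n'
      rw [pascal]
      have key : ((n' : ℚ) + 1) * (N1.choose (n'+1) : ℚ) = ((N1 : ℚ) - n') * (N1.choose n' : ℚ) :=
        cast_choose_succ_right N1 n'
      have hN1Q : ((N1 : ℕ) : ℚ) ≠ 0 := by exact_mod_cast (by omega : N1 ≠ 0)
      have hN1Q' : ((N1 : ℚ) + 1) ≠ 0 := by positivity
      have hNval : (N1 : ℚ) = q * (n'+1) + p := by push_cast [hN1]; ring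
      push_cast
      field_simp
      nlinarith [key, hNval]


lemma V_conv (q : ℕ) : ∀ n p r,
    (∑ i ∈ Finset.range (n+1), V q p i * V q r (n-i)) = V q (p+r) n := by
  intro n
  induction n using Nat.strong_induction_on with
  | _ n ih =>
    intro p
    induction p with
    | zero =>
      intro r
      rw [Finset.sum_eq_single 0]
      · simp [V_p0, V_n0]
      · intro i _ hi; simp [V_p0, hi]
      · intro h; simp at h
    | succ p ihp =>
      intro r
      have split : ∀ i, V q (p+1) i = V q p i + (if i = 0 then 0 else V q (p + q) (i - 1)) :=
        fun i => V_rec' q p i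
      simp only [split, add_mul, Finset.sum_add_distrib]
      rw [ihp r]
      have h2 : (∑ i ∈ Finset.range (n+1),
          (if i = 0 then 0 else V q (p + q) (i - 1)) * V q r (n-i))
          = if n = 0 then 0 else V q (p + q + r) (n - 1) := by
        rw [Finset.sum_range_succ']
        rcases n with _ | n'
        · simp
        · rw [if_neg (Nat.succ_ne_zero n')]
          have e1 : ∀ i ∈ Finset.range (n'+1),
              (if i+1 = 0 then (0:ℚ) else V q (p+q) (i+1-1)) * V q r (n'+1-(i+1))
              = V q (p+q) i * V q r (n'-i) := by
            intro i _
            rw [if_neg (Nat.succ_ne_zero i)]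
            congr 2 <;> omega
          rw [Finset.sum_congr rfl e1, ih n' (by omega) (p+q) r]
          simp
      rw [h2]
      have := V_rec' q (p + r) n
      rw [show p + 1 + r = p + r + 1 by ring, this]
      congr 1
      · rcases n with _ | n' <;> simp [show p + r + q = p + q + r by ring]

lemma V_subst (q' d q : ℕ) (hq : q' + d = q) : ∀ n c r,
    (∑ k ∈ Finset.range (n+1), V q' c k * V q (d*k + r) (n-k)) = V q (c+r) n := by
  intro n
  induction n using Nat.strong_induction_on with
  | _ n ih =>
    intro c
    induction c with
    | zero =>
      intro r
      rw [Finset.sum_eq_single 0]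
      · simp [V_p0, V_n0]
      · intro i _ hi; simp [V_p0, hi]
      · intro h; simp at h
    | succ c ihc =>
      intro r
      have split : ∀ k, V q' (c+1) k = V q' c k + (if k = 0 then 0 else V q' (c + q') (k - 1)) :=
        fun k => V_rec' q' c k
      simp only [split, add_mul, Finset.sum_add_distrib]
      rw [ihc r]
      have h2 : (∑ k ∈ Finset.range (n+1),
          (if k = 0 then 0 else V q' (c + q') (k - 1)) * V q (d*k + r) (n-k))
          = if n = 0 then 0 else V q (c + q' + (d + r)) (n - 1) := by
        rw [Finset.sum_range_succ']
        rcases n with _ | n'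
        · simp
        · rw [if_neg (Nat.succ_ne_zero n')]
          have e1 : ∀ k ∈ Finset.range (n'+1),
              (if k+1 = 0 then (0:ℚ) else V q' (c + q') (k+1-1)) * V q (d*(k+1) + r) (n'+1-(k+1))
              = V q' (c+q') k * V q (d*k + (d+r)) (n'-k) := by
            intro k _
            have h1 : d*(k+1)+r = d*k+(d+r) := by ring
            have h2 : n'+1-(k+1) = n'-k := by omega
            rw [if_neg (Nat.succ_ne_zero k), Nat.add_sub_cancel, h1, h2]
          rw [Finset.sum_congr rfl e1, ih n' (by omega) (c+q') (d+r)]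
          simp
      rw [h2]
      have := V_rec' q (c + r) n
      rw [show c + 1 + r = c + r + 1 by ring, this]
      congr 1
      rcases n with _ | n' <;> simp
      congr 1
      omega


lemma V_phi (a k : ℕ) (hk : 1 ≤ k) :
    ((a : ℚ) - 1 + (k : ℚ)⁻¹) * V (a*a) (a*a+a) (k-1) = V (a*a) a k := by
  rcases Nat.eq_zero_or_pos a with ha | ha
  · subst ha
    rcases Nat.lt_or_ge k 2 with h | h
    · have : k = 1 := by omega
      subst this
      simp [V_p0]
    · rw [V_p0, if_neg (by omega), V_p0, if_neg (by omega)]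
      ring
  · have haa : a*a + a ≠ 0 := by positivity
    have haQ : (a:ℚ) ≠ 0 := by exact_mod_cast ha.ne'
    obtain ⟨k', rfl⟩ : ∃ k', k = k' + 1 := ⟨k - 1, by omega⟩
    simp only [Nat.add_sub_cancel]
    have hN : a*a*k' + (a*a + a) = a*a*(k'+1) + a := by ring
    rw [V, V, if_neg haa, if_neg ha.ne', hN]
    set N : ℕ := a*a*(k'+1) + a with hNdef
    have hNpos : N ≠ 0 := by positivity
    have hNQ : ((N:ℕ):ℚ) ≠ 0 := by exact_mod_cast hNpos
    have key : ((k' : ℚ) + 1) * (N.choose (k' + 1) : ℚ) = ((N : ℚ) - k') * (N.choose k' : ℚ) :=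
      cast_choose_succ_right N k'
    have hkQ : ((k':ℚ)+1) ≠ 0 := by positivity
    have hNval : (N : ℚ) = a*a*(k'+1) + a := by push_cast [hNdef]; ring
    have hkQ' : ((k'+1 : ℕ) : ℚ) ≠ 0 := by exact_mod_cast hkQ
    push_cast
    rw [div_mul_eq_mul_div, div_mul_eq_mul_div, mul_div_assoc']
    rw [div_eq_div_iff hNQ hNQ]
    field_simp
    linear_combination (-1 : ℚ) * key - ((N.choose k' : ℕ):ℚ) * hNval

noncomputable def VW (q' d q c r j k : ℕ) : ℚ :=
  if k ≤ j then V q' c k * V q (d*k + r) (j - k) else 0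

lemma VW_c0 (q' d q r j k : ℕ) :
    VW q' d q 0 r j k = if k = 0 then V q r j else 0 := by
  unfold VW
  rcases Nat.eq_zero_or_pos k with hk | hk
  · subst hk; simp [V_p0, V_n0]
  · rw [if_neg (by omega : ¬ k = 0)]
    by_cases hkj : k ≤ j
    · rw [if_pos hkj, V_p0, if_neg (by omega), zero_mul]
    · rw [if_neg hkj]

lemma VW_rec (q' d q c r j k : ℕ) :
    VW q' d q (c+1) r j k = VW q' d q c r j k +
      (if k = 0 ∨ j = 0 then 0 else VW q' d q (c + q') (d + r) (j-1) (k-1)) := by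
  by_cases hkj : k ≤ j
  · unfold VW
    rw [if_pos hkj, if_pos hkj, V_rec' q' c k, add_mul]
    congr 1
    rcases Nat.eq_zero_or_pos k with hk | hk
    · subst hk; simp
    · obtain ⟨k'', rfl⟩ : ∃ k'', k = k'' + 1 := ⟨k - 1, by omega⟩
      rw [if_neg (by omega : ¬ (k''+1 = 0 ∨ j = 0)), if_neg (Nat.succ_ne_zero k''),
        if_pos (by omega : k''+1-1 ≤ j - 1)]
      have h1 : d * (k''+1-1) + (d + r) = d * (k''+1) + r := by simp; ring
      have h2 : j - 1 - (k''+1-1) = j - (k''+1) := by omega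
      rw [h1, h2]
  · unfold VW
    rw [if_neg hkj, if_neg hkj]
    have hk : ¬ k = 0 := by omega
    rcases Nat.eq_zero_or_pos j with hj | hj
    · subst hj; simp
    · rw [if_neg (by omega : ¬ (k = 0 ∨ j = 0)), if_neg (by omega : ¬ (k - 1 ≤ j - 1))]
      simp

lemma VW_conv (q' d q : ℕ) : ∀ j c r c' r' k,
    (∑ i ∈ Finset.range (j+1), ∑ x ∈ Finset.range (k+1),
      VW q' d q c r i x * VW q' d q c' r' (j-i) (k-x))
    = VW q' d q (c+c') (r+r') j k := by
  intro j
  induction j using Nat.strong_induction_on with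
  | _ j ih =>
    intro c
    induction c with
    | zero =>
      intro r c' r' k
      have inner : ∀ i ∈ Finset.range (j+1),
          (∑ x ∈ Finset.range (k+1), VW q' d q 0 r i x * VW q' d q c' r' (j-i) (k-x))
          = V q r i * VW q' d q c' r' (j-i) k := by
        intro i _
        rw [Finset.sum_eq_single 0]
        · rw [VW_c0, if_pos rfl, Nat.sub_zero]
        · intro x _ hx; rw [VW_c0, if_neg hx, zero_mul]
        · intro h; simp at h
      rw [Finset.sum_congr rfl inner]
      by_cases hkj : k ≤ j
      · have expand : ∀ i ∈ Finset.range (j+1),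
            V q r i * VW q' d q c' r' (j-i) k
            = (if i ≤ j - k then V q r i * V q (d*k + r') ((j-k) - i) else 0) * V q' c' k := by
          intro i hi
          simp only [Finset.mem_range] at hi
          unfold VW
          by_cases h : k ≤ j - i
          · rw [if_pos h, if_pos (by omega)]
            have : j - i - k = j - k - i := by omega
            rw [this]; ring
          · rw [if_neg h, if_neg (by omega), zero_mul, mul_zero]
        rw [Finset.sum_congr rfl expand, ← Finset.sum_mul]
        have hsub : Finset.range (j-k+1) ⊆ Finset.range (j+1) := by
          apply Finset.range_subset_range.mpr; omega
        rw [← Finset.sum_subset hsub]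
        · have : ∀ i ∈ Finset.range (j-k+1),
              (if i ≤ j - k then V q r i * V q (d*k + r') ((j-k) - i) else 0)
              = V q r i * V q (d*k + r') ((j-k) - i) := by
            intro i hi; rw [if_pos (by simp at hi; omega)]
          rw [Finset.sum_congr rfl this, V_conv q (j-k) r (d*k+r')]
          unfold VW
          rw [if_pos hkj, zero_add, show r + (d*k + r') = d*k + (r+r') by ring]
          ring
        · intro i _ hnot
          rw [if_neg (by simp only [Finset.mem_range] at hnot ⊢; omega)]
      · -- k > j : everything is 0
        rw [VW, if_neg hkj]
        apply Finset.sum_eq_zero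
        intro i hi
        simp only [Finset.mem_range] at hi
        rw [VW, if_neg (by omega : ¬ k ≤ j - i), mul_zero]
    | succ c ihc =>
      intro r c' r' k
      have split : ∀ i x, VW q' d q (c+1) r i x
          = VW q' d q c r i x + (if x = 0 ∨ i = 0 then 0 else VW q' d q (c + q') (d + r) (i-1) (x-1)) :=
        fun i x => VW_rec q' d q c r i x
      simp only [split, add_mul, Finset.sum_add_distrib]
      rw [ihc r c' r' k]
      have h2 : (∑ i ∈ Finset.range (j+1), ∑ x ∈ Finset.range (k+1),
          (if x = 0 ∨ i = 0 then 0 else VW q' d q (c + q') (d + r) (i-1) (x-1)) * VW q' d q c' r' (j-i) (k-x))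
          = if k = 0 ∨ j = 0 then 0 else VW q' d q (c + 1 + c' + q' - 1) (d + (r + r')) (j-1) (k-1) := by
        rcases Nat.eq_zero_or_pos k with hk | hk
        · subst hk
          rw [if_pos (Or.inl rfl)]
          apply Finset.sum_eq_zero; intro i _
          apply Finset.sum_eq_zero; intro x hx
          simp only [Finset.mem_range] at hx
          rw [if_pos (Or.inl (by omega)), zero_mul]
        rcases Nat.eq_zero_or_pos j with hj | hj
        · subst hj
          rw [if_pos (Or.inr rfl)]
          apply Finset.sum_eq_zero; intro i hi
          simp only [Finset.mem_range] at hi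
          apply Finset.sum_eq_zero; intro x _
          rw [if_pos (Or.inr (by omega)), zero_mul]
        · rw [if_neg (by omega)]
          rw [Finset.sum_range_succ']
          have hz : (∑ x ∈ Finset.range (k+1),
              (if x = 0 ∨ (0:ℕ) = 0 then 0 else VW q' d q (c + q') (d + r) (0-1) (x-1)) * VW q' d q c' r' (j-0) (k-x)) = 0 := by
            apply Finset.sum_eq_zero; intro x _
            rw [if_pos (Or.inr rfl), zero_mul]
          rw [hz, add_zero]
          obtain ⟨j', rfl⟩ : ∃ j', j = j' + 1 := ⟨j - 1, by omega⟩
          obtain ⟨k', rfl⟩ : ∃ k', k = k' + 1 := ⟨k - 1, by omega⟩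
          simp only [Nat.add_sub_cancel]
          have inner : ∀ i ∈ Finset.range (j'+1),
              (∑ x ∈ Finset.range (k'+1+1),
                (if x = 0 ∨ (i+1) = 0 then 0 else VW q' d q (c + q') (d + r) i (x-1)) * VW q' d q c' r' (j'+1-(i+1)) (k'+1-x))
              = ∑ x ∈ Finset.range (k'+1), VW q' d q (c + q') (d + r) i x * VW q' d q c' r' (j'-i) (k'-x) := by
            intro i _
            rw [Finset.sum_range_succ']
            rw [if_pos (Or.inl rfl), zero_mul, add_zero]
            apply Finset.sum_congr rfl
            intro x _
            rw [if_neg (by omega)]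
            simp only [Nat.add_sub_cancel]
            have e1 : j'+1-(i+1) = j'-i := by omega
            have e2 : k'+1-(x+1) = k'-x := by omega
            rw [e1, e2]
          rw [Finset.sum_congr rfl inner]
          rw [ih j' (by omega) (c+q') (d+r) c' r' k']
          have e3 : c + 1 + c' + q' - 1 = c + q' + c' := by omega
          have e4 : d + (r + r') = d + r + r' := by ring
          rw [e3, e4]
      rw [h2]
      have recC := VW_rec q' d q (c + c') (r+r') j k
      rw [show c + 1 + c' = (c + c') + 1 by ring, recC]
      congr 1
      rcases Nat.eq_zero_or_pos k with hk | hk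
      · subst hk; simp
      rcases Nat.eq_zero_or_pos j with hj | hj
      · subst hj; simp
      · rw [if_neg (by omega : ¬ (k = 0 ∨ j = 0)), if_neg (by omega : ¬ (k = 0 ∨ j = 0))]
        have e5 : c + c' + 1 + q' - 1 = c + c' + q' := by omega
        rw [e5]

def beqT {m : ℕ} : MTree m → MTree m → Bool
  | .leaf, .leaf => true
  | .leaf, .node _ => false
  | .node _, .leaf => false
  | .node c, .node d => (List.finRange m).all fun i => beqT (c i) (d i)

lemma beqT_iff {m : ℕ} : ∀ a b : MTree m, beqT a b = true ↔ a = b := by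
  intro a
  induction a with
  | leaf =>
    intro b
    cases b with
    | leaf => simp [beqT]
    | node d => simp [beqT]
  | node c ih =>
    intro b
    cases b with
    | leaf => simp [beqT]
    | node d =>
      simp only [beqT, List.all_eq_true]
      constructor
      · intro h
        have : c = d := funext fun i => (ih i (d i)).mp (h i (List.mem_finRange i))
        rw [this]
      · intro h i _
        injection h with h'
        exact (ih i (d i)).mpr (congrFun h' i)

instance instDecEqMTree {m : ℕ} : DecidableEq (MTree m) :=
  fun a b => decidable_of_iff _ (beqT_iff a b)

def treesLe (m : ℕ) : ℕ → Finset (MTree m)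
  | 0 => {MTree.leaf}
  | n + 1 => insert MTree.leaf ((Fintype.piFinset fun _ : Fin m => treesLe m n).image MTree.node)

lemma node_injective {m : ℕ} : Function.Injective (MTree.node (m := m)) := by
  intro a b h
  injection h

lemma mem_treesLe_of {m : ℕ} : ∀ (n : ℕ) (T : MTree m), T.internals ≤ n → T ∈ treesLe m n := by
  intro n
  induction n with
  | zero =>
    intro T hT
    cases T with
    | leaf => simp [treesLe]
    | node c => simp [MTree.internals] at hT
  | succ n ihn =>
    intro T hT
    cases T with
    | leaf => simp [treesLe]
    | node c =>
      have hsum : (1 + ∑ i, (c i).internals) ≤ n + 1 := hT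
      rw [treesLe]
      apply Finset.mem_insert_of_mem
      apply Finset.mem_image_of_mem
      rw [Fintype.mem_piFinset]
      intro i
      apply ihn
      calc (c i).internals ≤ ∑ j, (c j).internals :=
            Finset.single_le_sum (f := fun j => (c j).internals) (fun j _ => Nat.zero_le _) (Finset.mem_univ i)
        _ ≤ n := by omega

lemma internals_node {m : ℕ} (c : Fin m → MTree m) :
    (MTree.node c).internals = 1 + ∑ i, (c i).internals := rfl

lemma filter_treesLe_eq {m : ℕ} {n M M' : ℕ} (h : n ≤ M) (h' : n ≤ M') :
    (treesLe m M).filter (fun T => T.internals = n)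
      = (treesLe m M').filter (fun T => T.internals = n) := by
  ext T
  simp only [Finset.mem_filter]
  constructor
  · rintro ⟨-, h2⟩; exact ⟨mem_treesLe_of M' T (h2 ▸ h'), h2⟩
  · rintro ⟨-, h2⟩; exact ⟨mem_treesLe_of M T (h2 ▸ h), h2⟩

lemma filter_node_decomp {m : ℕ} (n : ℕ) :
    (treesLe m (n+1)).filter (fun T => T.internals = n + 1)
      = ((Fintype.piFinset fun _ : Fin m => treesLe m n).filter
          (fun c => (∑ i, (c i).internals) = n)).image MTree.node := by
  ext T
  simp only [Finset.mem_filter, Finset.mem_image]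
  constructor
  · rintro ⟨hmem, hint⟩
    cases T with
    | leaf => simp [MTree.internals] at hint
    | node c =>
      refine ⟨c, ⟨?_, ?_⟩, rfl⟩
      · rw [Fintype.mem_piFinset]
        intro i
        apply mem_treesLe_of
        rw [internals_node] at hint
        calc (c i).internals ≤ ∑ j, (c j).internals :=
              Finset.single_le_sum (f := fun j => (c j).internals) (fun j _ => Nat.zero_le _) (Finset.mem_univ i)
          _ ≤ n := by omega
      · rw [internals_node] at hint; omega
  · rintro ⟨c, ⟨-, hsum⟩, rfl⟩
    constructor
    · apply mem_treesLe_of; rw [internals_node]; omega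
    · rw [internals_node]; omega


open Polynomial


noncomputable def Wc (q' d q c r j : ℕ) : Polynomial ℚ :=
  ∑ k ∈ Finset.range (j+1), Polynomial.C (VW q' d q c r j k) * Polynomial.X ^ k

lemma VW_gt (q' d q c r j k : ℕ) (h : ¬ k ≤ j) : VW q' d q c r j k = 0 := by
  unfold VW; rw [if_neg h]

lemma Wc_coeff (q' d q c r j : ℕ) (κ : ℕ) :
    (Wc q' d q c r j).coeff κ = VW q' d q c r j κ := by
  unfold Wc
  rw [Polynomial.finset_sum_coeff]
  by_cases h : κ ≤ j
  · rw [Finset.sum_eq_single κ]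
    · simp
    · intro k _ hk
      simp [Polynomial.coeff_X_pow, (Ne.symm hk)]
    · intro hκ; simp at hκ; omega
  · rw [VW_gt _ _ _ _ _ _ _ h]
    apply Finset.sum_eq_zero
    intro k hk
    simp only [Finset.mem_range] at hk
    rw [Polynomial.coeff_C_mul, Polynomial.coeff_X_pow, if_neg (by omega : ¬ κ = k), mul_zero]

lemma Wc_zero (q' d q u : ℕ) : Wc q' d q 0 0 u = if u = 0 then 1 else 0 := by
  apply Polynomial.ext
  intro κ
  rw [Wc_coeff, VW_c0, V_p0]
  rcases Nat.eq_zero_or_pos κ with hκ | hκ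
  · subst hκ
    by_cases hu : u = 0 <;> simp [hu]
  · rw [if_neg (by omega : ¬ κ = 0)]
    by_cases hu : u = 0
    · rw [if_pos hu, Polynomial.coeff_one, if_neg (by omega : ¬ κ = 0)]
    · rw [if_neg hu, Polynomial.coeff_zero]

lemma Wc_conv (q' d q c r c' r' u : ℕ) :
    (∑ i ∈ Finset.range (u+1), Wc q' d q c r i * Wc q' d q c' r' (u-i))
      = Wc q' d q (c+c') (r+r') u := by
  apply Polynomial.ext
  intro κ
  rw [Wc_coeff, Polynomial.finset_sum_coeff]
  have e1 : ∀ i ∈ Finset.range (u+1),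
      (Wc q' d q c r i * Wc q' d q c' r' (u-i)).coeff κ
      = ∑ x ∈ Finset.range (κ+1), VW q' d q c r i x * VW q' d q c' r' (u-i) (κ-x) := by
    intro i _
    rw [Polynomial.coeff_mul, Finset.Nat.sum_antidiagonal_eq_sum_range_succ_mk]
    apply Finset.sum_congr rfl
    intro x _
    rw [Wc_coeff, Wc_coeff]
  rw [Finset.sum_congr rfl e1, VW_conv]

lemma Wc_prod {ι : Type*} (q' d q : ℕ) (t : Finset ι) (P : ι → Polynomial (Polynomial ℚ))
    (cc rr : ι → ℕ) (J : ℕ)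
    (h : ∀ i ∈ t, ∀ u ≤ J, (P i).coeff u = Wc q' d q (cc i) (rr i) u) :
    ∀ u ≤ J, (∏ i ∈ t, P i).coeff u = Wc q' d q (∑ i ∈ t, cc i) (∑ i ∈ t, rr i) u := by
  classical
  induction t using Finset.cons_induction with
  | empty =>
    intro u hu
    simp only [Finset.prod_empty, Finset.sum_empty]
    rw [Wc_zero]
    by_cases h0 : u = 0 <;> simp [h0, Polynomial.coeff_one]
  | cons i t hit iht =>
    intro u hu
    rw [Finset.prod_cons, Finset.sum_cons, Finset.sum_cons]
    rw [Polynomial.coeff_mul, Finset.Nat.sum_antidiagonal_eq_sum_range_succ_mk]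
    have e1 : ∀ x ∈ Finset.range (u+1),
        (P i).coeff x * (∏ j ∈ t, P j).coeff (u-x)
        = Wc q' d q (cc i) (rr i) x * Wc q' d q (∑ j ∈ t, cc j) (∑ j ∈ t, rr j) (u-x) := by
      intro x hx
      simp only [Finset.mem_range] at hx
      rw [h i (Finset.mem_cons_self i t) x (by omega),
        iht (fun j hj => h j (Finset.mem_cons_of_mem hj)) (u-x) (by omega)]
    rw [Finset.sum_congr rfl e1, Wc_conv]

section Trees
variable (m : ℕ) (S : Finset (Fin m))

/-- tracked positions -/
def DD : Finset (Fin (m+1)) := (S.image Fin.castSucc)ᶜ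

noncomputable def fQ : ℕ → ℚ := fun h => ((m - S.card : ℕ) : ℚ) - 1 + (h : ℚ)⁻¹

noncomputable def wt (T : MTree (m+1)) : Polynomial ℚ :=
  Polynomial.C (T.hookProdS S (fQ m S)) * Polynomial.X ^ (T.internalsS S)

noncomputable def Acur (n : ℕ) : Polynomial ℚ :=
  ∑ T ∈ (treesLe (m+1) n).filter (fun T => T.internals = n), wt m S T

noncomputable def Gpoly (M : ℕ) : Polynomial (Polynomial ℚ) :=
  ∑ T ∈ treesLe (m+1) M, Polynomial.C (wt m S T) * Polynomial.X ^ T.internals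

noncomputable def Hpoly (M : ℕ) : Polynomial (Polynomial ℚ) :=
  ∑ T ∈ treesLe (m+1) M,
    Polynomial.C (Polynomial.C (T.hookProdS S (fQ m S))) * Polynomial.X ^ T.internals

noncomputable def Phi (p : Polynomial ℚ) : Polynomial ℚ :=
  p.sum fun k r => Polynomial.C (fQ m S k * r) * Polynomial.X ^ k

lemma Phi_add (p q : Polynomial ℚ) : Phi m S (p + q) = Phi m S p + Phi m S q := by
  unfold Phi
  apply Polynomial.sum_add_index
  · intro i; rw [mul_zero, map_zero, zero_mul]
  · intro i b1 b2; rw [mul_add, map_add, add_mul]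

lemma Phi_zero : Phi m S 0 = 0 := by
  unfold Phi; exact Polynomial.sum_zero_index _

lemma Phi_finset_sum {ι : Type*} (t : Finset ι) (p : ι → Polynomial ℚ) :
    Phi m S (∑ i ∈ t, p i) = ∑ i ∈ t, Phi m S (p i) := by
  classical
  induction t using Finset.cons_induction with
  | empty => simp [Phi_zero]
  | cons i t hit iht =>
    rw [Finset.sum_cons, Finset.sum_cons, Phi_add, iht]

lemma Phi_monomial (k : ℕ) (r : ℚ) :
    Phi m S (Polynomial.C r * Polynomial.X ^ k) = Polynomial.C (fQ m S k * r) * Polynomial.X ^ k := by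
  unfold Phi
  rw [Polynomial.C_mul_X_pow_eq_monomial]
  exact Polynomial.sum_monomial_index r _ (by rw [mul_zero, map_zero, zero_mul])

lemma coeff_Phi (p : Polynomial ℚ) (κ : ℕ) :
    (Phi m S p).coeff κ = fQ m S κ * p.coeff κ := by
  unfold Phi
  rw [Polynomial.sum_def, Polynomial.finset_sum_coeff]
  by_cases h : κ ∈ p.support
  · rw [Finset.sum_eq_single κ]
    · rw [Polynomial.coeff_C_mul, Polynomial.coeff_X_pow, if_pos rfl, mul_one]
    · intro k _ hk
      rw [Polynomial.coeff_C_mul, Polynomial.coeff_X_pow, if_neg (Ne.symm hk), mul_zero]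
    · intro hks; exact absurd h hks
  · have hp : p.coeff κ = 0 := Polynomial.notMem_support_iff.mp h
    rw [hp, mul_zero]
    apply Finset.sum_eq_zero
    intro k hk
    rw [Polynomial.coeff_C_mul, Polynomial.coeff_X_pow, if_neg, mul_zero]
    intro he; exact h (he ▸ hk)

lemma coeff_Gpoly {n M : ℕ} (h : n ≤ M) : (Gpoly m S M).coeff n = Acur m S n := by
  unfold Gpoly Acur
  rw [Polynomial.finset_sum_coeff]
  have e1 : ∀ T ∈ treesLe (m+1) M,
      (Polynomial.C (wt m S T) * Polynomial.X ^ T.internals).coeff n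
      = if T.internals = n then wt m S T else 0 := by
    intro T _
    rw [Polynomial.coeff_C_mul, Polynomial.coeff_X_pow]
    by_cases hT : T.internals = n
    · rw [if_pos (hT.symm), if_pos hT, mul_one]
    · rw [if_neg (fun hh => hT hh.symm), if_neg hT, mul_zero]
  rw [Finset.sum_congr rfl e1, ← Finset.sum_filter,
    filter_treesLe_eq h (le_refl n)]

lemma eval_wt (T : MTree (m+1)) : (wt m S T).eval 1 = T.hookProdS S (fQ m S) := by
  unfold wt; simp

lemma coeff_Hpoly {n M : ℕ} (h : n ≤ M) : (Hpoly m S M).coeff n = Polynomial.C ((Acur m S n).eval 1) := by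
  unfold Hpoly
  rw [Polynomial.finset_sum_coeff]
  have e1 : ∀ T ∈ treesLe (m+1) M,
      (Polynomial.C (Polynomial.C (T.hookProdS S (fQ m S))) * Polynomial.X ^ T.internals).coeff n
      = if T.internals = n then Polynomial.C (T.hookProdS S (fQ m S)) else 0 := by
    intro T _
    rw [Polynomial.coeff_C_mul, Polynomial.coeff_X_pow]
    by_cases hT : T.internals = n
    · rw [if_pos (hT.symm), if_pos hT, mul_one]
    · rw [if_neg (fun hh => hT hh.symm), if_neg hT, mul_zero]
  rw [Finset.sum_congr rfl e1, ← Finset.sum_filter, filter_treesLe_eq h (le_refl n)]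
  unfold Acur
  rw [Polynomial.eval_finset_sum, map_sum]
  apply Finset.sum_congr rfl
  intro T _
  rw [eval_wt]

/-- The structural decomposition of the weighted tree sum. -/
lemma SL (n : ℕ) :
    Acur m S (n+1)
      = Phi m S (Polynomial.X *
          (∏ i : Fin (m+1), (if i ∈ DD m S then Gpoly m S n else Hpoly m S n)).coeff n) := by
  classical
  -- rewrite each factor as a sum over trees
  have factor_eq : ∀ i : Fin (m+1),
      (if i ∈ DD m S then Gpoly m S n else Hpoly m S n)
      = ∑ T ∈ treesLe (m+1) n,
          Polynomial.C (if i ∈ DD m S then wt m S T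
            else Polynomial.C (T.hookProdS S (fQ m S))) * Polynomial.X ^ T.internals := by
    intro i
    by_cases hi : i ∈ DD m S
    · rw [if_pos hi]; unfold Gpoly; apply Finset.sum_congr rfl; intro T _; rw [if_pos hi]
    · rw [if_neg hi]; unfold Hpoly; apply Finset.sum_congr rfl; intro T _; rw [if_neg hi]
  rw [Finset.prod_congr rfl (fun i _ => factor_eq i)]
  rw [Finset.prod_univ_sum]
  -- compute each product term
  have term_eq : ∀ c : Fin (m+1) → MTree (m+1),
      (∏ i : Fin (m+1),
        Polynomial.C (if i ∈ DD m S then wt m S (c i)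
          else Polynomial.C ((c i).hookProdS S (fQ m S))) * Polynomial.X ^ (c i).internals)
      = Polynomial.C (Polynomial.C (∏ i, (c i).hookProdS S (fQ m S))
            * Polynomial.X ^ (∑ i ∈ DD m S, (c i).internalsS S))
          * Polynomial.X ^ (∑ i, (c i).internals) := by
    intro c
    rw [Finset.prod_mul_distrib, Finset.prod_pow_eq_pow_sum, ← map_prod]
    have e2 : ∀ i : Fin (m+1),
        (if i ∈ DD m S then wt m S (c i) else Polynomial.C ((c i).hookProdS S (fQ m S)))
        = Polynomial.C ((c i).hookProdS S (fQ m S))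
            * (if i ∈ DD m S then Polynomial.X ^ ((c i).internalsS S) else 1) := by
      intro i
      by_cases hi : i ∈ DD m S
      · rw [if_pos hi, if_pos hi]; rfl
      · rw [if_neg hi, if_neg hi, mul_one]
    congr 1
    congr 1
    rw [Finset.prod_congr rfl (fun i _ => e2 i), Finset.prod_mul_distrib, ← map_prod,
      Finset.prod_ite_mem, Finset.univ_inter, Finset.prod_pow_eq_pow_sum]
  rw [Finset.sum_congr rfl (fun c _ => term_eq c)]
  -- coefficient extraction
  rw [Polynomial.finset_sum_coeff]
  have coeff_eq : ∀ c : Fin (m+1) → MTree (m+1),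
      (Polynomial.C (Polynomial.C (∏ i, (c i).hookProdS S (fQ m S))
            * Polynomial.X ^ (∑ i ∈ DD m S, (c i).internalsS S))
          * Polynomial.X ^ (∑ i, (c i).internals)).coeff n
      = if (∑ i, (c i).internals) = n then
          Polynomial.C (∏ i, (c i).hookProdS S (fQ m S))
            * Polynomial.X ^ (∑ i ∈ DD m S, (c i).internalsS S) else 0 := by
    intro c
    rw [Polynomial.coeff_C_mul, Polynomial.coeff_X_pow]
    by_cases hc : (∑ i, (c i).internals) = n
    · rw [if_pos (hc.symm), if_pos hc, mul_one]
    · rw [if_neg (fun hh => hc hh.symm), if_neg hc, mul_zero]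
  rw [Finset.sum_congr rfl (fun c _ => coeff_eq c), ← Finset.sum_filter]
  rw [Finset.mul_sum, Phi_finset_sum]
  -- left side : decompose trees
  unfold Acur
  rw [filter_node_decomp, Finset.sum_image (fun x _ y _ h => node_injective h)]
  apply Finset.sum_congr rfl
  intro c hc
  -- per-component identity
  have hwt : wt m S (MTree.node c)
      = Polynomial.C ((fQ m S (1 + ∑ i ∈ DD m S, (c i).internalsS S))
            * ∏ i, (c i).hookProdS S (fQ m S))
          * Polynomial.X ^ (1 + ∑ i ∈ DD m S, (c i).internalsS S) := by
    unfold wt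
    have hint : (MTree.node c).internalsS S = 1 + ∑ i ∈ DD m S, (c i).internalsS S := rfl
    have hhook : (MTree.node c).hookProdS S (fQ m S)
        = fQ m S ((MTree.node c).internalsS S) * ∏ i, (c i).hookProdS S (fQ m S) := rfl
    rw [hhook, hint]
  rw [hwt]
  have hX : Polynomial.X * (Polynomial.C (∏ i, (c i).hookProdS S (fQ m S))
        * Polynomial.X ^ (∑ i ∈ DD m S, (c i).internalsS S))
      = Polynomial.C (∏ i, (c i).hookProdS S (fQ m S))
        * Polynomial.X ^ (1 + ∑ i ∈ DD m S, (c i).internalsS S) := by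
    rw [pow_add, pow_one]; ring
  rw [hX, Phi_monomial]

end Trees

section Main
variable (m : ℕ) (S : Finset (Fin m))

lemma hs_le : S.card ≤ m := by
  have h := Finset.card_le_univ S
  simpa using h

lemma card_DD : (DD m S).card = m + 1 - S.card := by
  unfold DD
  rw [Finset.card_compl, Finset.card_image_of_injective _ (Fin.castSucc_injective m)]
  simp

lemma Wc_n0 (q' d q p : ℕ) : Wc q' d q p 0 0 = 1 := by
  unfold Wc
  rw [Finset.range_one, Finset.sum_singleton, pow_zero, mul_one]
  have h : VW q' d q p 0 0 0 = 1 := by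
    unfold VW
    rw [if_pos (le_refl 0), V_n0, V_n0, mul_one]
  rw [h, map_one]

lemma Wc_0r (q' d q r u : ℕ) : Wc q' d q 0 r u = Polynomial.C (V q r u) := by
  unfold Wc
  rw [Finset.sum_eq_single 0]
  · rw [VW_c0, if_pos rfl, pow_zero, mul_one]
  · intro k _ hk
    rw [VW_c0, if_neg hk, map_zero, zero_mul]
  · intro h; simp at h

lemma eval_Wc (q' d q : ℕ) (hq : q' + d = q) (p u : ℕ) :
    (Wc q' d q p 0 u).eval 1 = V q p u := by
  unfold Wc
  rw [Polynomial.eval_finset_sum]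
  have e1 : ∀ k ∈ Finset.range (u+1),
      (Polynomial.C (VW q' d q p 0 u k) * Polynomial.X ^ k).eval 1
      = V q' p k * V q (d*k + 0) (u-k) := by
    intro k hk
    simp only [Finset.mem_range] at hk
    rw [Polynomial.eval_mul, Polynomial.eval_C, Polynomial.eval_pow, Polynomial.eval_X,
      one_pow, mul_one]
    unfold VW
    rw [if_pos (by omega : k ≤ u)]
  rw [Finset.sum_congr rfl e1, V_subst q' d q hq u p 0, Nat.add_zero]

lemma Acur_zero : Acur m S 0 = 1 := by
  unfold Acur
  have h1 : treesLe (m+1) 0 = {MTree.leaf} := rfl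
  rw [h1, Finset.filter_singleton, if_pos (show MTree.internals (MTree.leaf : MTree (m+1)) = 0 from rfl),
    Finset.sum_singleton]
  unfold wt
  have h2 : (MTree.leaf : MTree (m+1)).hookProdS S (fQ m S) = 1 := rfl
  have h3 : (MTree.leaf : MTree (m+1)).internalsS S = 0 := rfl
  rw [h2, h3, pow_zero, map_one, one_mul]

lemma FS (n : ℕ) :
    Phi m S (Polynomial.X * Wc ((m-S.card)*(m-S.card)) ((m-S.card)*S.card) ((m-S.card)*m)
        ((m-S.card)*(m-S.card) + (m-S.card)) ((m-S.card)*S.card) n)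
    = Wc ((m-S.card)*(m-S.card)) ((m-S.card)*S.card) ((m-S.card)*m) (m-S.card) 0 (n+1) := by
  set a := m - S.card with ha
  apply Polynomial.ext
  intro κ
  rw [coeff_Phi, Wc_coeff]
  rcases κ with _ | κ'
  · rw [Polynomial.mul_coeff_zero, Polynomial.coeff_X_zero, zero_mul, mul_zero]
    have h0 : VW (a*a) (a*S.card) (a*m) a 0 (n+1) 0 = 0 := by
      unfold VW
      rw [if_pos (Nat.zero_le _), Nat.mul_zero, Nat.zero_add, V_p0,
        if_neg (by omega : ¬ n+1-0 = 0), mul_zero]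
    rw [h0]
  · rw [Polynomial.coeff_X_mul, Wc_coeff]
    by_cases hκ : κ' ≤ n
    · unfold VW
      rw [if_pos hκ, if_pos (by omega : κ'+1 ≤ n+1)]
      have e2 : a*S.card*(κ'+1) + 0 = a*S.card*κ' + a*S.card := by ring
      have e3 : n+1 - (κ'+1) = n - κ' := by omega
      rw [e2, e3]
      have hphi := V_phi a (κ'+1) (by omega)
      rw [Nat.add_sub_cancel] at hphi
      have hfq : fQ m S (κ'+1) = ((a:ℚ) - 1 + ((κ'+1 : ℕ):ℚ)⁻¹) := by
        unfold fQ; rw [← ha]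
      rw [hfq, ← mul_assoc, hphi]
    · rw [VW_gt _ _ _ _ _ _ _ hκ, VW_gt _ _ _ _ _ _ _ (by omega : ¬ κ'+1 ≤ n+1), mul_zero]

lemma main_ind : ∀ n, Acur m S n
    = Wc ((m-S.card)*(m-S.card)) ((m-S.card)*S.card) ((m-S.card)*m) (m-S.card) 0 n := by
  have hsm := hs_le m S
  have hq : (m-S.card)*(m-S.card) + (m-S.card)*S.card = (m-S.card)*m := by
    have hms : (m - S.card) + S.card = m := by omega
    calc (m-S.card)*(m-S.card) + (m-S.card)*S.card = (m-S.card)*((m-S.card)+S.card) := by ring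
      _ = (m-S.card)*m := by rw [hms]
  have hcard : (DD m S).card = (m - S.card) + 1 := by
    rw [card_DD]; omega
  intro n
  induction n using Nat.strong_induction_on with
  | _ n ih =>
    match n with
    | 0 => rw [Acur_zero, Wc_n0]
    | (n'+1) =>
      rw [SL m S n']
      have hsum_cc : (∑ i : Fin (m+1), (if i ∈ DD m S then (m-S.card) else 0))
          = (m-S.card)*(m-S.card) + (m-S.card) := by
        rw [Finset.sum_ite_mem, Finset.univ_inter, Finset.sum_const, hcard, smul_eq_mul]
        ring
      have hsum_rr : (∑ i : Fin (m+1), (if i ∈ DD m S then 0 else (m-S.card)))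
          = (m-S.card)*S.card := by
        have h1 : (∑ i : Fin (m+1), ((if i ∈ DD m S then (m-S.card) else 0)
            + (if i ∈ DD m S then 0 else (m-S.card)))) = (m+1) * (m-S.card) := by
          have e : ∀ i : Fin (m+1), (if i ∈ DD m S then (m-S.card) else 0)
              + (if i ∈ DD m S then 0 else (m-S.card)) = (m-S.card) := by
            intro i; by_cases hi : i ∈ DD m S <;> simp [hi]
          rw [Finset.sum_congr rfl (fun i _ => e i), Finset.sum_const, Finset.card_univ,
            Fintype.card_fin, smul_eq_mul]
        rw [Finset.sum_add_distrib, hsum_cc] at h1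
        have h2 : (m+1) * (m-S.card)
            = ((m-S.card)*(m-S.card) + (m-S.card)) + (m-S.card)*S.card := by
          have hms : m + 1 = ((m-S.card) + 1) + S.card := by omega
          rw [hms]; ring
        rw [h2] at h1
        exact Nat.add_left_cancel h1
      have hhyp : ∀ i ∈ (Finset.univ : Finset (Fin (m+1))), ∀ u ≤ n',
          ((if i ∈ DD m S then Gpoly m S n' else Hpoly m S n') : Polynomial (Polynomial ℚ)).coeff u
          = Wc ((m-S.card)*(m-S.card)) ((m-S.card)*S.card) ((m-S.card)*m)
              ((fun i => if i ∈ DD m S then (m-S.card) else 0) i)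
              ((fun i => if i ∈ DD m S then 0 else (m-S.card)) i) u := by
        intro i _ u hu
        by_cases hi : i ∈ DD m S
        · simp only [hi, if_true]
          rw [coeff_Gpoly m S hu, ih u (by omega)]
        · simp only [hi, if_false]
          rw [coeff_Hpoly m S hu, ih u (by omega), eval_Wc _ _ _ hq, Wc_0r]
      have hprod := Wc_prod ((m-S.card)*(m-S.card)) ((m-S.card)*S.card) ((m-S.card)*m)
        Finset.univ (fun i => if i ∈ DD m S then Gpoly m S n' else Hpoly m S n')
        (fun i => if i ∈ DD m S then (m-S.card) else 0)
        (fun i => if i ∈ DD m S then 0 else (m-S.card)) n' hhyp n' (le_refl n')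
      rw [hsum_cc, hsum_rr] at hprod
      rw [hprod, FS m S n']

lemma prod_desc : ∀ (n N : ℕ), n ≤ N →
    (∏ j ∈ Finset.range n, ((N:ℚ) - (j:ℚ))) = ((N.choose n : ℕ) : ℚ) * ((n.factorial : ℕ) : ℚ) := by
  intro n
  induction n with
  | zero => intro N _; simp
  | succ n ihn =>
    intro N h
    rw [Finset.prod_range_succ, ihn N (by omega)]
    have key : ((n:ℚ)+1) * ((N.choose (n+1) : ℕ) : ℚ) = ((N:ℚ) - n) * ((N.choose n : ℕ):ℚ) :=
      cast_choose_succ_right N n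
    push_cast [Nat.factorial_succ]
    linear_combination (-((n.factorial:ℕ):ℚ)) * key

end Main


end HLAux

/-- **Corollary (x = m-s-1 in Theorem 1.2).**  For `m ≥ 0`, `n ≥ 1` and `S ⊆ [m]`
with `s = |S|`,
`∑_{T ∈ 𝒯_{n,m+1}} ∏_{v ∈ 𝓘(T)} (m - s - 1 + 1/ℍ_v^S)
  = (1/(mn+1)) ⬝ C((mn+1)(m-s), n)`, where `C(N,n) = N(N-1)⋯(N-n+1)/n!`. -/
theorem hook_length_second_kind_corollary₁ (m n : ℕ) (hn : 1 ≤ n)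
    (S : Finset (Fin m)) :
    (∑ᶠ T ∈ {T : MTree (m + 1) | T.internals = n},
        MTree.hookProdS S (fun h =>
          (m : ℚ) - (S.card : ℚ) - 1 + ((h : ℚ))⁻¹) T)
      = ((m : ℚ) * n + 1)⁻¹ * (n.factorial : ℚ)⁻¹ *
          ∏ j ∈ Finset.range n,
            (((m : ℚ) * n + 1) * ((m : ℚ) - (S.card : ℚ)) - (j : ℚ)) := by
  classical
  have hsm : S.card ≤ m := HLAux.hs_le m S
  have hq : (m-S.card)*(m-S.card) + (m-S.card)*S.card = (m-S.card)*m := by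
    have hms : (m - S.card) + S.card = m := by omega
    calc (m-S.card)*(m-S.card) + (m-S.card)*S.card
        = (m-S.card)*((m-S.card)+S.card) := by ring
      _ = (m-S.card)*m := by rw [hms]
  have hfeq : (fun h : ℕ => (m : ℚ) - (S.card : ℚ) - 1 + ((h : ℚ))⁻¹) = HLAux.fQ m S := by
    funext h
    unfold HLAux.fQ
    rw [Nat.cast_sub hsm]
  have hset : {T : MTree (m+1) | T.internals = n}
      = ↑((HLAux.treesLe (m+1) n).filter (fun T => T.internals = n)) := by
    ext T
    simp only [Set.mem_setOf_eq, Finset.coe_filter, Set.mem_setOf_eq]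
    constructor
    · intro hT; exact ⟨HLAux.mem_treesLe_of n T (le_of_eq hT), hT⟩
    · rintro ⟨-, hT⟩; exact hT
  rw [hfeq, hset, finsum_mem_coe_finset]
  have hL : (∑ T ∈ (HLAux.treesLe (m+1) n).filter (fun T => T.internals = n),
        T.hookProdS S (HLAux.fQ m S))
      = (HLAux.Acur m S n).eval 1 := by
    unfold HLAux.Acur
    rw [Polynomial.eval_finset_sum]
    exact (Finset.sum_congr rfl (fun T _ => (HLAux.eval_wt m S T).symm))
  rw [hL, HLAux.main_ind m S n, HLAux.eval_Wc _ _ _ hq]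
  -- now a pure computation
  rcases Nat.eq_zero_or_pos (m - S.card) with ha0 | hapos
  · -- degenerate case : m = S.card
    rw [ha0]
    rw [HLAux.V_p0, if_neg (by omega : ¬ n = 0)]
    have hc0 : (m:ℚ) - (S.card:ℚ) = 0 := by
      rw [sub_eq_zero]
      exact_mod_cast (by omega : m = S.card)
    have hzero : (∏ j ∈ Finset.range n,
        (((m : ℚ) * n + 1) * ((m : ℚ) - (S.card : ℚ)) - (j : ℚ))) = 0 := by
      apply Finset.prod_eq_zero (Finset.mem_range.mpr (by omega : 0 < n))
      rw [hc0]
      push_cast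
      ring
    rw [hzero, mul_zero]
  · set a := m - S.card with ha
    have ham : 1 ≤ m := by omega
    have hNform : a * m * n + a = a * (m * n + 1) := by ring
    rw [HLAux.V, if_neg (by omega : ¬ a = 0), hNform]
    set N : ℕ := a * (m * n + 1) with hN
    have hnN : n ≤ N := by
      have h1 : m * n + 1 ≤ N := by
        rw [hN]
        calc m * n + 1 = 1 * (m * n + 1) := by ring
          _ ≤ a * (m * n + 1) := Nat.mul_le_mul_right _ hapos
      have h2 : n < m * n + 1 := by
        calc n = 1 * n := by ring
          _ ≤ m * n := Nat.mul_le_mul_right _ ham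
          _ < m * n + 1 := by omega
      omega
    have hprod : (∏ j ∈ Finset.range n,
        (((m : ℚ) * n + 1) * ((m : ℚ) - (S.card : ℚ)) - (j : ℚ)))
        = ((N.choose n : ℕ) : ℚ) * ((n.factorial : ℕ) : ℚ) := by
      rw [← HLAux.prod_desc n N hnN]
      apply Finset.prod_congr rfl
      intro j _
      congr 1
      have hcast : (m:ℚ) - (S.card:ℚ) = (a:ℚ) := by
        rw [ha, Nat.cast_sub hsm]
      rw [hcast]
      rw [show ((N:ℕ):ℚ) = ((a:ℕ):ℚ) * ((m:ℚ)*(n:ℚ)+1) from by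
        rw [hN]; push_cast; ring]
      ring
    rw [hprod]
    have haQ : ((a:ℕ):ℚ) ≠ 0 := by exact_mod_cast (by omega : ¬ a = 0)
    have hmn1 : ((m:ℚ) * n + 1) ≠ 0 := by positivity
    have hNQ : ((N:ℕ):ℚ) ≠ 0 := by
      exact_mod_cast (by positivity : 0 < a * (m*n+1)).ne'
    have hfac : ((n.factorial : ℕ):ℚ) ≠ 0 := by
      exact_mod_cast n.factorial_pos.ne'
    have hNcast : ((N:ℕ):ℚ) = (a:ℚ) * ((m:ℚ) * n + 1) := by
      rw [hN]; push_cast; ring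
    field_simp
    rw [hNcast]
    ring
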